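/- Let C ⊆ F_p^n with character sum f(y) = Σ_{c∈C} ω^{c·y}, and let T = {s : C + s = C}. Then f vanishes outside T^⊥, i.e., if y ∉ T^⊥ then f(y) = 0. Conversely, if f(y) = 0 for all y outside a subspace V_0, then V_0^⊥ ⊆ T. -/
import Mathlib


open Finset

/-- `ω = exp(2πi/p)`. -/
noncomputable def omegaP (p : ℕ) : ℂ := Complex.exp (2 * Real.pi * Complex.I / p)

/-- standard dot product on `F_p^n`. -/
def dotp {p n : ℕ} (x y : Fin n → ZMod p) : ZMod p := ∑ i, x i * y i

/-- character sum `f(y) = Σ_{c ∈ C} ω^{c·y}`. -/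
noncomputable def fsum {p n : ℕ} (C : Finset (Fin n → ZMod p)) (y : Fin n → ZMod p) : ℂ :=
  ∑ c ∈ C, omegaP p ^ (dotp c y).val

section aux

variable {p : ℕ} [hp : Fact p.Prime]

noncomputable def chi (p : ℕ) (a : ZMod p) : ℂ := omegaP p ^ a.val

lemma primroot (p : ℕ) [hp : Fact p.Prime] : IsPrimitiveRoot (omegaP p) p :=
  Complex.isPrimitiveRoot_exp p hp.out.ne_zero

lemma omega_pow_p : omegaP p ^ p = 1 := (primroot p).pow_eq_one

lemma omega_pow_mod (m : ℕ) : omegaP p ^ (m % p) = omegaP p ^ m := by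
  conv_rhs => rw [← Nat.div_add_mod m p]
  rw [pow_add, pow_mul, omega_pow_p, one_pow, one_mul]

lemma chi_zero : chi p 0 = 1 := by simp [chi]

lemma chi_add (a b : ZMod p) : chi p (a + b) = chi p a * chi p b := by
  have : NeZero p := ⟨hp.out.ne_zero⟩
  rw [chi, chi, chi, ZMod.val_add, omega_pow_mod, pow_add]

lemma chi_ne_one {a : ZMod p} (ha : a ≠ 0) : chi p a ≠ 1 := by
  have : NeZero p := ⟨hp.out.ne_zero⟩
  intro h
  have hd : p ∣ a.val := (primroot p).dvd_of_pow_eq_one _ h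
  have hlt : a.val < p := ZMod.val_lt a
  have hne : a.val ≠ 0 := fun h0 => ha ((ZMod.val_eq_zero a).mp h0)
  exact hne (Nat.eq_zero_of_dvd_of_lt hd hlt)

lemma chi_sum {ι : Type*} (s : Finset ι) (f : ι → ZMod p) :
    chi p (∑ i ∈ s, f i) = ∏ i ∈ s, chi p (f i) := by
  classical
  induction s using Finset.cons_induction with
  | empty => simp [chi_zero]
  | cons i s hi ih => rw [Finset.sum_cons, Finset.prod_cons, chi_add, ih]

lemma sum_chi : ∑ a : ZMod p, chi p a = 0 := by
  have : NeZero p := ⟨hp.out.ne_zero⟩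
  have h : ∑ a : ZMod p, chi p a = ∑ i ∈ Finset.range p, omegaP p ^ i := by
    refine Finset.sum_nbij' (fun a => a.val) (fun i => (i : ZMod p)) ?_ ?_ ?_ ?_ ?_
    · intro a _; exact Finset.mem_range.mpr (ZMod.val_lt a)
    · intro i _; exact Finset.mem_univ _
    · intro a _; exact ZMod.natCast_rightInverse a
    · intro i hi; exact ZMod.val_natCast_of_lt (Finset.mem_range.mp hi)
    · intro a _; rfl
  rw [h]
  exact (primroot p).geom_sum_eq_zero hp.out.one_lt

lemma sum_chi_mul {d : ZMod p} (hd : d ≠ 0) : ∑ t : ZMod p, chi p (d * t) = 0 := by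
  rw [Fintype.sum_bijective (fun t => d * t) (Equiv.mulLeft₀ d hd).bijective
    (fun t => chi p (d * t)) (chi p) (fun t => rfl)]
  exact sum_chi

end aux

section auxn

variable {p n : ℕ} [hp : Fact p.Prime]

lemma dotp_add_left (a b y : Fin n → ZMod p) : dotp (a + b) y = dotp a y + dotp b y := by
  simp [dotp, add_mul, Finset.sum_add_distrib]

lemma dotp_neg_left (a y : Fin n → ZMod p) : dotp (-a) y = - dotp a y := by
  simp [dotp]

lemma sum_chi_dotp (d : Fin n → ZMod p) :
    ∑ y : Fin n → ZMod p, chi p (dotp d y) = if d = 0 then (p : ℂ) ^ n else 0 := by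
  have h1 : ∀ y : Fin n → ZMod p, chi p (dotp d y) = ∏ i, chi p (d i * y i) := fun y =>
    chi_sum _ _
  simp_rw [h1]
  rw [← Fintype.prod_sum (fun i t => chi p (d i * t))]
  by_cases hd : d = 0
  · subst hd
    simp [chi_zero, ZMod.card]
  · obtain ⟨i, hi⟩ := Function.ne_iff.mp hd
    rw [if_neg hd]
    exact Finset.prod_eq_zero (Finset.mem_univ i) (sum_chi_mul hi)

lemma inversion (C : Finset (Fin n → ZMod p)) (x : Fin n → ZMod p) :
    ∑ y : Fin n → ZMod p, fsum C y * chi p (- dotp x y) =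
      if x ∈ C then (p : ℂ) ^ n else 0 := by
  have : ∀ y : Fin n → ZMod p, fsum C y * chi p (- dotp x y)
      = ∑ c ∈ C, chi p (dotp (c + (-x)) y) := by
    intro y
    rw [fsum, Finset.sum_mul]
    refine Finset.sum_congr rfl fun c _ => ?_
    rw [dotp_add_left, chi_add, dotp_neg_left]
    rfl
  simp_rw [this]
  rw [Finset.sum_comm]
  have h2 : ∀ c : Fin n → ZMod p,
      ∑ y : Fin n → ZMod p, chi p (dotp (c + (-x)) y) = if c = x then (p:ℂ)^n else 0 := by
    intro c
    rw [sum_chi_dotp]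
    congr 1
    simp [sub_eq_zero, add_neg_eq_zero]
  simp_rw [h2]
  rw [Finset.sum_ite_eq' C x (fun _ => (p:ℂ)^n)]

end auxn

/-- The character sum `f` of `C` vanishes outside `T^⊥`, where `T` is the translation
stabilizer of `C`; conversely, if `f` vanishes outside a subspace `V₀`, then `V₀^⊥ ⊆ T`. -/
theorem stmt8 (p n : ℕ) [Fact p.Prime] (C : Finset (Fin n → ZMod p)) :
    (∀ y : Fin n → ZMod p,
      (∃ s : Fin n → ZMod p, C.image (fun c => c + s) = C ∧ dotp s y ≠ 0) →
        fsum C y = 0) ∧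
    (∀ V0 : Submodule (ZMod p) (Fin n → ZMod p),
      (∀ y ∉ V0, fsum C y = 0) →
      ∀ s : Fin n → ZMod p, (∀ v ∈ V0, dotp s v = 0) →
        C.image (fun c => c + s) = C) := by
  constructor
  · rintro y ⟨s, hC, hsy⟩
    have hinj : Function.Injective (fun c : Fin n → ZMod p => c + s) :=
      fun a b h => by simpa using h
    have key : fsum C y = chi p (dotp s y) * fsum C y := by
      conv_lhs => rw [fsum, ← hC, Finset.sum_image (fun a _ b _ h => hinj h)]
      rw [fsum, Finset.mul_sum]
      refine Finset.sum_congr rfl fun c _ => ?_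
      show chi p (dotp (c + s) y) = _
      rw [dotp_add_left, chi_add, mul_comm]
      rfl
    have : (chi p (dotp s y) - 1) * fsum C y = 0 := by
      rw [sub_mul, one_mul, ← key, sub_self]
    rcases mul_eq_zero.mp this with h | h
    · exact absurd (by linear_combination h : chi p (dotp s y) = 1) (chi_ne_one hsy)
    · exact h
  · intro V0 hV s hs
    have hpn : ((p : ℂ) ^ n) ≠ 0 :=
      pow_ne_zero _ (Nat.cast_ne_zero.mpr (Fact.out : p.Prime).ne_zero)
    have key : ∀ x : Fin n → ZMod p, (x + s ∈ C ↔ x ∈ C) := by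
      intro x
      have hS : ∑ y : Fin n → ZMod p, fsum C y * chi p (- dotp (x + s) y)
          = ∑ y : Fin n → ZMod p, fsum C y * chi p (- dotp x y) := by
        refine Finset.sum_congr rfl fun y _ => ?_
        by_cases hy : y ∈ V0
        · rw [dotp_add_left, hs y hy, add_zero]
        · rw [hV y hy, zero_mul, zero_mul]
      rw [inversion, inversion] at hS
      by_cases h1 : x + s ∈ C <;> by_cases h2 : x ∈ C
      · simp [h1, h2]
      · rw [if_pos h1, if_neg h2] at hS; exact absurd hS hpn
      · rw [if_neg h1, if_pos h2] at hS; exact absurd hS.symm hpn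
      · simp [h1, h2]
    ext a
    simp only [Finset.mem_image]
    constructor
    · rintro ⟨c, hc, rfl⟩
      exact (key c).mpr hc
    · intro ha
      refine ⟨a - s, ?_, by ring⟩
      have := (key (a - s))
      rw [sub_add_cancel] at this
      exact this.mp ha
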